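/- Let T be a finite forest that is at most trivalent (every vertex has degree at most 3) with an even number 2N of edges. Then the line graph perfect matching is unique: there is exactly one perfect matching of the edges of T into adjacent pairs (pairs of edges sharing a vertex). -/

import Mathlib

open SimpleGraph

set_option linter.unusedSectionVars false
set_option maxHeartbeats 1000000

section MOKdefs
variable {V : Type*} [DecidableEq V]

/-- The matching-validity predicate, depending only on the edge finset. -/
def MOK (E : Finset (Sym2 V)) (M : Finset (Finset (Sym2 V))) : Prop :=
  (∀ p ∈ M, ∃ e f, e ∈ E ∧ f ∈ E ∧ e ≠ f ∧
      p = {e, f} ∧ ∃ v : V, v ∈ e ∧ v ∈ f)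
  ∧ (∀ e ∈ E, ∃! p, p ∈ M ∧ e ∈ p)

lemma MOK.pair_struct {E : Finset (Sym2 V)} {M : Finset (Finset (Sym2 V))}
    (h : MOK E M) {p : Finset (Sym2 V)} (hp : p ∈ M) {e : Sym2 V} (he : e ∈ p) :
    ∃ f, f ∈ E ∧ f ≠ e ∧ p = {e, f} ∧ (∃ v : V, v ∈ e ∧ v ∈ f) := by
  obtain ⟨a, b, haE, hbE, hab, hpab, v, hva, hvb⟩ := h.1 p hp
  subst hpab
  rcases Finset.mem_insert.1 he with rfl | hb
  · exact ⟨b, hbE, fun hh => hab hh.symm, by simp [Finset.pair_comm], ⟨v, hva, hvb⟩⟩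
  · rcases Finset.mem_singleton.1 hb with rfl
    exact ⟨a, haE, hab, by rw [Finset.pair_comm], ⟨v, hvb, hva⟩⟩

lemma MOK.mem_of_mem_pair {E : Finset (Sym2 V)} {M : Finset (Finset (Sym2 V))}
    (h : MOK E M) {p : Finset (Sym2 V)} (hp : p ∈ M) {e : Sym2 V} (he : e ∈ p) :
    e ∈ E := by
  obtain ⟨a, b, haE, hbE, _, hpab, _⟩ := h.1 p hp
  subst hpab
  rcases Finset.mem_insert.1 he with rfl | hb
  · exact haE
  · rcases Finset.mem_singleton.1 hb with rfl; exact hbE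

/-- Forcing, case B : the only edge adjacent to `e1` is `g`. -/
lemma MOK.forcedB {E : Finset (Sym2 V)} {M : Finset (Finset (Sym2 V))}
    (h : MOK E M) {e1 g : Sym2 V} (he1 : e1 ∈ E)
    (hadj : ∀ f ∈ E, f ≠ e1 → (∃ v : V, v ∈ e1 ∧ v ∈ f) → f = g) :
    ({e1, g} : Finset (Sym2 V)) ∈ M := by
  obtain ⟨p, ⟨hpM, hep⟩, _⟩ := h.2 e1 he1
  obtain ⟨f, hfE, hfne, rfl, v, hv1, hv2⟩ := h.pair_struct hpM hep
  rw [hadj f hfE hfne ⟨v, hv1, hv2⟩] at hpM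
  exact hpM

/-- Forcing, case A : `e1`'s neighbours are among `{e2, g}`, `e2`'s among `{e1, g}`;
then `{e1, e2} ∈ M`. -/
lemma MOK.forcedA {E : Finset (Sym2 V)} {M : Finset (Finset (Sym2 V))}
    (h : MOK E M) {e1 e2 g : Sym2 V} (he1 : e1 ∈ E) (he2 : e2 ∈ E)
    (hne : e1 ≠ e2) (hg1 : g ≠ e1) (hg2 : g ≠ e2)
    (hadj1 : ∀ f ∈ E, f ≠ e1 → (∃ v : V, v ∈ e1 ∧ v ∈ f) → f = e2 ∨ f = g)
    (hadj2 : ∀ f ∈ E, f ≠ e2 → (∃ v : V, v ∈ e2 ∧ v ∈ f) → f = e1 ∨ f = g) :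
    ({e1, e2} : Finset (Sym2 V)) ∈ M := by
  obtain ⟨p1, ⟨hp1M, he1p1⟩, huniq1⟩ := h.2 e1 he1
  obtain ⟨f1, hf1E, hf1ne, hp1eq, v1, hv11, hv12⟩ := h.pair_struct hp1M he1p1
  rcases hadj1 f1 hf1E hf1ne ⟨v1, hv11, hv12⟩ with hc1 | hc1
  · rw [hc1] at hp1eq; rwa [hp1eq] at hp1M
  · -- f1 = g, so p1 = {e1, g}
    exfalso
    rw [hc1] at hp1eq
    obtain ⟨p2, ⟨hp2M, he2p2⟩, _⟩ := h.2 e2 he2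
    obtain ⟨f2, hf2E, hf2ne, hp2eq, v2, hv21, hv22⟩ := h.pair_struct hp2M he2p2
    rcases hadj2 f2 hf2E hf2ne ⟨v2, hv21, hv22⟩ with hc2 | hc2
    · -- p2 = {e2, e1} also contains e1
      rw [hc2] at hp2eq
      have h1 : p2 = p1 := huniq1 p2 ⟨hp2M, by rw [hp2eq]; simp⟩
      rw [hp1eq, hp2eq] at h1
      have hgm : g ∈ ({e2, e1} : Finset (Sym2 V)) := by rw [h1]; simp
      rcases Finset.mem_insert.1 hgm with hh | hh
      · exact hg2 hh
      · exact hg1 (Finset.mem_singleton.1 hh)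
    · -- p2 = {e2, g}; g is in two distinct pairs
      rw [hc2] at hp2eq
      have hgE : g ∈ E := by rw [← hc2]; exact hf2E
      obtain ⟨pg, _, huniqg⟩ := h.2 g hgE
      have h1 : p1 = pg := huniqg p1 ⟨hp1M, by rw [hp1eq]; simp⟩
      have h2 : p2 = pg := huniqg p2 ⟨hp2M, by rw [hp2eq]; simp⟩
      have h3 : ({e1, g} : Finset (Sym2 V)) = {e2, g} := by
        rw [← hp1eq, ← hp2eq, h1, h2]
      have he1m : e1 ∈ ({e2, g} : Finset (Sym2 V)) := by rw [← h3]; simp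
      rcases Finset.mem_insert.1 he1m with hh | hh
      · exact hne hh
      · exact hg1 (Finset.mem_singleton.1 hh).symm

/-- Extension: add a forced pair to a matching on the smaller edge set. -/
lemma MOK.extend {E E' : Finset (Sym2 V)} {M' : Finset (Finset (Sym2 V))}
    {e1 e2 : Sym2 V}
    (h : MOK E' M') (hE : ∀ f, f ∈ E ↔ (f = e1 ∨ f = e2 ∨ f ∈ E'))
    (he1 : e1 ∉ E') (he2 : e2 ∉ E') (hne : e1 ≠ e2)
    (hshare : ∃ v : V, v ∈ e1 ∧ v ∈ e2) :
    MOK E (insert {e1, e2} M') := by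
  have he1E : e1 ∈ E := (hE e1).2 (Or.inl rfl)
  have he2E : e2 ∈ E := (hE e2).2 (Or.inr (Or.inl rfl))
  constructor
  · intro p hp
    rcases Finset.mem_insert.1 hp with rfl | hpM
    · exact ⟨e1, e2, he1E, he2E, hne, rfl, hshare⟩
    · obtain ⟨a, b, haE, hbE, hab, hpab, hv⟩ := h.1 p hpM
      exact ⟨a, b, (hE a).2 (Or.inr (Or.inr haE)), (hE b).2 (Or.inr (Or.inr hbE)),
        hab, hpab, hv⟩
  · intro e heE
    rcases (hE e).1 heE with rfl | rfl | heE'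
    · refine ⟨{e, e2}, ⟨Finset.mem_insert_self _ _, by simp⟩, ?_⟩
      rintro p ⟨hpM, hep⟩
      rcases Finset.mem_insert.1 hpM with rfl | hpM'
      · rfl
      · exact absurd (h.mem_of_mem_pair hpM' hep) he1
    · refine ⟨{e1, e}, ⟨Finset.mem_insert_self _ _, by simp⟩, ?_⟩
      rintro p ⟨hpM, hep⟩
      rcases Finset.mem_insert.1 hpM with rfl | hpM'
      · rfl
      · exact absurd (h.mem_of_mem_pair hpM' hep) he2
    · obtain ⟨p, ⟨hpM, hep⟩, huniq⟩ := h.2 e heE'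
      refine ⟨p, ⟨Finset.mem_insert_of_mem hpM, hep⟩, ?_⟩
      rintro q ⟨hqM, heq⟩
      rcases Finset.mem_insert.1 hqM with rfl | hqM'
      · exfalso
        rcases Finset.mem_insert.1 heq with rfl | hh
        · exact he1 heE'
        · rw [Finset.mem_singleton.1 hh] at heE'; exact he2 heE'
      · exact huniq q ⟨hqM', heq⟩

/-- Restriction: remove a pair from a matching. -/
lemma MOK.restrict {E E' : Finset (Sym2 V)} {M : Finset (Finset (Sym2 V))}
    {e1 e2 : Sym2 V}
    (h : MOK E M) (hpair : ({e1, e2} : Finset (Sym2 V)) ∈ M)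
    (hne : e1 ≠ e2)
    (hE' : ∀ f, f ∈ E' ↔ (f ∈ E ∧ f ≠ e1 ∧ f ≠ e2)) :
    MOK E' (M.erase {e1, e2}) := by
  have he1E : e1 ∈ E := h.mem_of_mem_pair hpair (by simp)
  have he2E : e2 ∈ E := h.mem_of_mem_pair hpair (by simp)
  have key : ∀ p ∈ M, p ≠ ({e1, e2} : Finset (Sym2 V)) → e1 ∉ p ∧ e2 ∉ p := by
    intro p hpM hpne
    constructor
    · intro he1p
      obtain ⟨q, _, huniq⟩ := h.2 e1 he1E
      exact hpne ((huniq p ⟨hpM, he1p⟩).trans (huniq _ ⟨hpair, by simp⟩).symm)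
    · intro he2p
      obtain ⟨q, _, huniq⟩ := h.2 e2 he2E
      exact hpne ((huniq p ⟨hpM, he2p⟩).trans (huniq _ ⟨hpair, by simp⟩).symm)
  constructor
  · intro p hp
    obtain ⟨hpne, hpM⟩ := Finset.mem_erase.1 hp
    obtain ⟨a, b, haE, hbE, hab, hpab, hv⟩ := h.1 p hpM
    obtain ⟨hn1, hn2⟩ := key p hpM hpne
    subst hpab
    refine ⟨a, b, ?_, ?_, hab, rfl, hv⟩
    · exact (hE' a).2 ⟨haE, fun hh => hn1 (by rw [← hh]; simp),
        fun hh => hn2 (by rw [← hh]; simp)⟩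
    · exact (hE' b).2 ⟨hbE, fun hh => hn1 (by rw [← hh]; simp),
        fun hh => hn2 (by rw [← hh]; simp)⟩
  · intro e heE'
    obtain ⟨heE, hene1, hene2⟩ := (hE' e).1 heE'
    obtain ⟨p, ⟨hpM, hep⟩, huniq⟩ := h.2 e heE
    have hpne : p ≠ ({e1, e2} : Finset (Sym2 V)) := by
      rintro rfl
      rcases Finset.mem_insert.1 hep with rfl | hh
      · exact hene1 rfl
      · exact hene2 (Finset.mem_singleton.1 hh)
    refine ⟨p, ⟨Finset.mem_erase.2 ⟨hpne, hpM⟩, hep⟩, ?_⟩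
    rintro q ⟨hq, heq⟩
    exact huniq q ⟨(Finset.mem_erase.1 hq).2, heq⟩

lemma MOK_empty {M : Finset (Finset (Sym2 V))} :
    MOK (∅ : Finset (Sym2 V)) M ↔ M = ∅ := by
  constructor
  · intro h
    ext p
    simp only [Finset.notMem_empty, iff_false]
    intro hp
    obtain ⟨e, _, heE, _⟩ := h.1 p hp
    exact absurd heE (Finset.notMem_empty e)
  · rintro rfl
    exact ⟨fun p hp => absurd hp (Finset.notMem_empty p),
      fun e he => absurd he (Finset.notMem_empty e)⟩

end MOKdefs

section GraphLemmas
variable {V : Type*} [DecidableEq V] {G : SimpleGraph V}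

lemma walk_closed {S : Set V} (hS : ∀ a ∈ S, ∀ b, G.Adj a b → b ∈ S) :
    ∀ {a w : V} (_ : G.Walk a w), a ∈ S → w ∈ S
  | _, _, SimpleGraph.Walk.nil, ha => ha
  | _, _, SimpleGraph.Walk.cons h p, ha => walk_closed hS p (hS _ ha _ h)

lemma mem_support_of_mem_edges' {x y v : V} {p : G.Walk x y} {e : Sym2 V}
    (he : e ∈ p.edges) (hv : v ∈ e) : v ∈ p.support := by
  induction e with
  | _ a b =>
    rcases Sym2.mem_iff.1 hv with rfl | rfl
    · exact p.fst_mem_support_of_mem_edges he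
    · exact p.snd_mem_support_of_mem_edges he

lemma reachable_of_mem_edge {e : Sym2 V} (he : e ∈ G.edgeSet) {v w : V}
    (hv : v ∈ e) (hw : w ∈ e) : G.Reachable v w := by
  induction e with
  | _ a b =>
    have hab : G.Adj a b := he
    rcases Sym2.mem_iff.1 hv with rfl | rfl <;> rcases Sym2.mem_iff.1 hw with rfl | rfl
    · exact Reachable.refl _
    · exact hab.reachable
    · exact hab.symm.reachable
    · exact Reachable.refl _

lemma exists_snd {a b : V} (p : G.Walk a b) (hne : a ≠ b) :
    ∃ (c : V) (h : G.Adj a c) (q : G.Walk c b), p = SimpleGraph.Walk.cons h q := by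
  cases p with
  | nil => exact absurd rfl hne
  | cons h q => exact ⟨_, h, q, rfl⟩

/-- An internal vertex of a path has two distinct neighbours on the path. -/
lemma internal_two_nbrs {x y v : V} {p : G.Walk x y} (hp : p.IsPath)
    (hv : v ∈ p.support) (hx : v ≠ x) (hy : v ≠ y) :
    ∃ n1 n2, n1 ≠ n2 ∧ G.Adj v n1 ∧ G.Adj v n2 ∧ n1 ∈ p.support ∧ n2 ∈ p.support := by
  have hspec := p.take_spec hv
  have hp' : ((p.takeUntil v hv).append (p.dropUntil v hv)).IsPath := by rw [hspec]; exact hp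
  obtain ⟨n2, h2, q2, hq2⟩ := exists_snd (p.dropUntil v hv) hy
  obtain ⟨n1, h1, q1, hq1⟩ := exists_snd (p.takeUntil v hv).reverse hx
  have hn1mem : n1 ∈ (p.takeUntil v hv).support := by
    have h' : n1 ∈ (p.takeUntil v hv).reverse.support := by
      rw [hq1, SimpleGraph.Walk.support_cons]
      exact List.mem_cons_of_mem _ q1.start_mem_support
    rwa [SimpleGraph.Walk.support_reverse, List.mem_reverse] at h'
  have hn2mem : n2 ∈ (p.dropUntil v hv).support.tail := by
    rw [hq2, SimpleGraph.Walk.support_cons]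
    exact SimpleGraph.Walk.start_mem_support q2
  have hnodup : ((p.takeUntil v hv).support ++ (p.dropUntil v hv).support.tail).Nodup := by
    rw [← SimpleGraph.Walk.support_append]
    exact hp'.support_nodup
  have hdisj := List.disjoint_of_nodup_append hnodup
  have hne : n1 ≠ n2 := fun hh => hdisj hn1mem (hh ▸ hn2mem)
  have hsupp : p.support = (p.takeUntil v hv).support ++ (p.dropUntil v hv).support.tail := by
    rw [← SimpleGraph.Walk.support_append, hspec]
  refine ⟨n1, n2, hne, h1, h2, ?_, ?_⟩
  · rw [hsupp]; exact List.mem_append_left _ hn1mem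
  · rw [hsupp]; exact List.mem_append_right _ hn2mem

/-- In a forest, if a neighbour `z` of the start of a path lies on the path,
then the edge `s(a,z)` is an edge of the path. -/
lemma start_edge_mem {a b z : V} {w : G.Walk a b} (hforest : G.IsAcyclic)
    (hw : w.IsPath) (hz : G.Adj a z) (hsup : z ∈ w.support) :
    s(a, z) ∈ w.edges := by
  have ht : (w.takeUntil z hsup).IsPath := hw.takeUntil _
  have huniq := hforest.path_unique ⟨w.takeUntil z hsup, ht⟩ (SimpleGraph.Path.singleton hz)
  have heq : w.takeUntil z hsup = SimpleGraph.Walk.cons hz SimpleGraph.Walk.nil :=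
    congrArg Subtype.val huniq
  have : s(a, z) ∈ (w.takeUntil z hsup).edges := by
    rw [heq, SimpleGraph.Walk.edges_cons]; simp
  exact w.edges_takeUntil_subset hsup this

/-- On a path starting `a → u → ⋯`, an edge of the form `s(a,z)` with `z ≠ a`
forces `z = u`. -/
lemma snd_of_edge {a u b z : V} {h : G.Adj a u} {q : G.Walk u b}
    (hp : (SimpleGraph.Walk.cons h q).IsPath)
    (he : s(a, z) ∈ (SimpleGraph.Walk.cons h q).edges) : z = u := by
  rw [SimpleGraph.Walk.edges_cons] at he
  rcases List.mem_cons.1 he with hh | hh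
  · rcases Sym2.eq_iff.1 hh with ⟨_, h2⟩ | ⟨h1, h2⟩
    · exact h2
    · exact absurd (h1 ▸ h) (G.irrefl)
  · exfalso
    have : a ∈ q.support := mem_support_of_mem_edges' hh (by simp)
    exact ((SimpleGraph.Walk.cons_isPath_iff h q).1 hp).2 this

lemma acyclic_anti {G' : SimpleGraph V} (hle : G' ≤ G) (h : G.IsAcyclic) : G'.IsAcyclic :=
  fun _v c hc => h (c.mapLe hle) (hc.mapLe hle)

lemma degree_le_of_le' {G' : SimpleGraph V} [Fintype V]
    [DecidableRel G.Adj] [DecidableRel G'.Adj] (hle : G' ≤ G) (v : V) :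
    G'.degree v ≤ G.degree v := by
  classical
  apply Finset.card_le_card
  intro x hx
  rw [SimpleGraph.mem_neighborFinset] at *
  exact hle hx

lemma edge_through {f : Sym2 V} (hf : f ∈ G.edgeSet) {v : V} (hv : v ∈ f) :
    ∃ y, G.Adj v y ∧ f = s(v, y) := by
  induction f with
  | _ c d =>
    have hcd : G.Adj c d := hf
    rcases Sym2.mem_iff.1 hv with rfl | rfl
    · exact ⟨d, hcd, rfl⟩
    · exact ⟨c, hcd.symm, Sym2.eq_swap⟩

/-- Evenness of per-component edge counts transfers to the graph with two
deleted edges, under suitable hypotheses. -/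
lemma even_transfer [Fintype V]
    {B : Set V} {e1 e2 : Sym2 V}
    (hne : e1 ≠ e2) (he1S : e1 ∈ G.edgeSet) (he2S : e2 ∈ G.edgeSet)
    (hshare : ∃ u : V, u ∈ e1 ∧ u ∈ e2)
    (hB1 : ∃ v ∈ B, v ∈ e1) (hB2 : ∃ v ∈ B, v ∈ e2)
    (H2 : ∀ (x y : V) (p : G.Walk x y), p.IsPath → x ∉ B → y ∉ B →
      ∀ v ∈ B, v ∉ p.support)
    (H3 : ∀ v ∈ B, ∀ w, ¬ (G.deleteEdges {e1, e2}).Adj v w)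
    (H4 : ∀ f ∈ G.edgeSet, ∀ v ∈ B, v ∈ f → f = e1 ∨ f = e2)
    (heven : ∀ c : G.ConnectedComponent,
      Even ({e ∈ G.edgeSet | ∀ v ∈ e, G.connectedComponentMk v = c}.ncard)) :
    ∀ c' : (G.deleteEdges {e1, e2}).ConnectedComponent,
      Even ({e ∈ (G.deleteEdges {e1, e2}).edgeSet |
        ∀ v ∈ e, (G.deleteEdges {e1, e2}).connectedComponentMk v = c'}.ncard) := by
  set G' := G.deleteEdges {e1, e2} with hG'
  have hle : G' ≤ G := G.deleteEdges_le _
  intro c'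
  induction c' using SimpleGraph.ConnectedComponent.ind with
  | _ w0 =>
  by_cases hw0 : w0 ∈ B
  · -- component of an isolated vertex: no edges
    have hempty : {e ∈ G'.edgeSet |
        ∀ v ∈ e, G'.connectedComponentMk v = G'.connectedComponentMk w0} = ∅ := by
      ext e
      simp only [Set.mem_setOf_eq, Set.mem_empty_iff_false, iff_false, not_and]
      intro heG' hall
      induction e with
      | _ a b =>
        have hadj : G'.Adj a b := heG'
        have hra : G'.Reachable w0 a :=
          (SimpleGraph.ConnectedComponent.eq.1 (hall a (by simp))).symm
        obtain ⟨pw⟩ := hra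
        have ha : a ∈ ({w0} : Set V) := walk_closed
          (by rintro x rfl y hy; exact absurd hy (H3 _ hw0 _)) pw rfl
        rw [Set.mem_singleton_iff] at ha
        subst ha
        exact H3 _ hw0 _ hadj
    rw [hempty]
    simpa using even_zero
  · -- w0 ∉ B
    have R1 : ∀ v, v ∉ B → (G.Reachable v w0 ↔ G'.Reachable v w0) := by
      intro v hv
      constructor
      · intro hr
        obtain ⟨p⟩ := hr
        obtain ⟨q, hq⟩ := p.toPath
        have hedges : ∀ f ∈ q.edges, f ∉ ({e1, e2} : Set (Sym2 V)) := by
          intro f hf hfs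
          rcases hfs with rfl | hfs
          · obtain ⟨bv, hbvB, hbv1⟩ := hB1
            exact H2 v w0 q hq hv hw0 bv hbvB (mem_support_of_mem_edges' hf hbv1)
          · rw [Set.mem_singleton_iff] at hfs
            subst hfs
            obtain ⟨bv, hbvB, hbv2⟩ := hB2
            exact H2 v w0 q hq hv hw0 bv hbvB (mem_support_of_mem_edges' hf hbv2)
        exact ⟨q.toDeleteEdges _ hedges⟩
      · exact fun hr => hr.mono hle
    set S : Set (Sym2 V) :=
      {e ∈ G.edgeSet | ∀ v ∈ e, G.connectedComponentMk v = G.connectedComponentMk w0}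
      with hS
    have hSeq : {e ∈ G'.edgeSet |
        ∀ v ∈ e, G'.connectedComponentMk v = G'.connectedComponentMk w0}
        = S \ {e1, e2} := by
      ext e
      simp only [hS, Set.mem_setOf_eq, Set.mem_diff, hG', edgeSet_deleteEdges,
        Set.mem_insert_iff, Set.mem_singleton_iff]
      constructor
      · rintro ⟨⟨heG, hes⟩, hall⟩
        refine ⟨⟨heG, fun v hv => ?_⟩, hes⟩
        exact SimpleGraph.ConnectedComponent.eq.2
          ((SimpleGraph.ConnectedComponent.eq.1 (hall v hv)).mono hle)
      · rintro ⟨⟨heG, hall⟩, hes⟩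
        refine ⟨⟨heG, hes⟩, fun v hv => ?_⟩
        have hvB : v ∉ B := fun hvB => hes (H4 e heG v hvB hv)
        exact SimpleGraph.ConnectedComponent.eq.2
          ((R1 v hvB).1 (SimpleGraph.ConnectedComponent.eq.1 (hall v hv)))
    rw [hSeq]
    by_cases h1 : e1 ∈ S
    · obtain ⟨u, hu1, hu2⟩ := hshare
      have hu : G.connectedComponentMk u = G.connectedComponentMk w0 := h1.2 u hu1
      have h2 : e2 ∈ S := by
        refine ⟨he2S, fun v hv => ?_⟩
        have : G.Reachable v u := reachable_of_mem_edge he2S hv hu2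
        rw [← hu]
        exact SimpleGraph.ConnectedComponent.eq.2 this
      have hsub : ({e1, e2} : Set (Sym2 V)) ⊆ S := by
        rintro f (rfl | hf)
        · exact h1
        · rw [Set.mem_singleton_iff] at hf; subst hf; exact h2
      rw [Set.ncard_diff hsub, Set.ncard_pair hne]
      obtain ⟨k, hk⟩ := heven (G.connectedComponentMk w0)
      rw [hS] at *
      exact ⟨k - 1, by rw [hk]; omega⟩
    · have h2 : e2 ∉ S := by
        intro h2
        apply h1
        obtain ⟨u, hu1, hu2⟩ := hshare
        refine ⟨he1S, fun v hv => ?_⟩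
        have : G.Reachable v u := reachable_of_mem_edge he1S hv hu1
        rw [← h2.2 u hu2]
        exact SimpleGraph.ConnectedComponent.eq.2 this
      have hdiff : S \ ({e1, e2} : Set (Sym2 V)) = S := by
        ext f
        simp only [Set.mem_diff, Set.mem_insert_iff, Set.mem_singleton_iff]
        constructor
        · exact fun h => h.1
        · intro hf
          refine ⟨hf, ?_⟩
          rintro (rfl | rfl)
          · exact h1 hf
          · exact h2 hf
      rw [hdiff]
      exact heven _

end GraphLemmas
section Main

variable {V : Type*} [Fintype V] [DecidableEq V]

lemma finish_step {m : ℕ}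
    (G : SimpleGraph V) [inst0 : DecidableRel G.Adj]
    (hforest : G.IsAcyclic) (hdeg : ∀ v, G.degree v ≤ 3)
    (hcard : G.edgeFinset.card = 2 * (m + 1))
    (heven : ∀ c : G.ConnectedComponent,
      Even ({e ∈ G.edgeSet | ∀ v ∈ e, G.connectedComponentMk v = c}.ncard))
    (ih : ∀ (G' : SimpleGraph V) (inst : DecidableRel G'.Adj),
      G'.IsAcyclic → (∀ v, G'.degree v ≤ 3) → G'.edgeFinset.card = 2 * m →
      (∀ c : G'.ConnectedComponent,
        Even ({e ∈ G'.edgeSet | ∀ v ∈ e, G'.connectedComponentMk v = c}.ncard)) →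
      ∃! M, MOK G'.edgeFinset M)
    {e1 e2 : Sym2 V} (hne : e1 ≠ e2)
    (he1m : e1 ∈ G.edgeFinset) (he2m : e2 ∈ G.edgeFinset)
    (hshare : ∃ v : V, v ∈ e1 ∧ v ∈ e2)
    (hforced : ∀ M, MOK G.edgeFinset M → ({e1, e2} : Finset (Sym2 V)) ∈ M)
    {B : Set V}
    (hB1 : ∃ v ∈ B, v ∈ e1) (hB2 : ∃ v ∈ B, v ∈ e2)
    (H2 : ∀ (x y : V) (p : G.Walk x y), p.IsPath → x ∉ B → y ∉ B →
      ∀ v ∈ B, v ∉ p.support)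
    (H3 : ∀ v ∈ B, ∀ w, ¬ (G.deleteEdges {e1, e2}).Adj v w)
    (H4 : ∀ f ∈ G.edgeSet, ∀ v ∈ B, v ∈ f → f = e1 ∨ f = e2) :
    ∃! M, MOK G.edgeFinset M := by
  classical
  set G' := G.deleteEdges {e1, e2} with hG'def
  haveI instD : DecidableRel G'.Adj := fun x y =>
    decidable_of_iff (G.Adj x y ∧ ¬(s(x, y) = e1 ∨ s(x, y) = e2)) (by
      rw [hG'def, deleteEdges_adj]
      simp [Set.mem_insert_iff, Set.mem_singleton_iff])
  have hle : G' ≤ G := G.deleteEdges_le _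
  have he1S : e1 ∈ G.edgeSet := mem_edgeFinset.1 he1m
  have he2S : e2 ∈ G.edgeSet := mem_edgeFinset.1 he2m
  have hEchar : ∀ f, f ∈ G'.edgeFinset ↔ (f ∈ G.edgeFinset ∧ f ≠ e1 ∧ f ≠ e2) := by
    intro f
    rw [mem_edgeFinset, mem_edgeFinset, hG'def, edgeSet_deleteEdges]
    simp only [Set.mem_diff, Set.mem_insert_iff, Set.mem_singleton_iff]
    tauto
  have hE'eq : G'.edgeFinset = (G.edgeFinset.erase e1).erase e2 := by
    ext f
    rw [hEchar, Finset.mem_erase, Finset.mem_erase]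
    tauto
  have he2' : e2 ∈ G.edgeFinset.erase e1 :=
    Finset.mem_erase.2 ⟨fun hh => hne hh.symm, he2m⟩
  have hcard' : G'.edgeFinset.card = 2 * m := by
    rw [hE'eq, Finset.card_erase_of_mem he2', Finset.card_erase_of_mem he1m, hcard]
    omega
  have hforest' : G'.IsAcyclic := acyclic_anti hle hforest
  have hdeg' : ∀ v, G'.degree v ≤ 3 := fun v => le_trans (degree_le_of_le' hle v) (hdeg v)
  have heven' := even_transfer hne he1S he2S hshare hB1 hB2 H2 H3 H4 heven
  obtain ⟨M0, hM0, hM0uniq⟩ := ih G' instD hforest' hdeg' hcard' heven'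
  have hE : ∀ f, f ∈ G.edgeFinset ↔ (f = e1 ∨ f = e2 ∨ f ∈ G'.edgeFinset) := by
    intro f
    rw [hEchar]
    constructor
    · intro hf
      by_cases h1 : f = e1
      · exact Or.inl h1
      by_cases h2 : f = e2
      · exact Or.inr (Or.inl h2)
      · exact Or.inr (Or.inr ⟨hf, h1, h2⟩)
    · rintro (rfl | rfl | ⟨hf, _, _⟩)
      · exact he1m
      · exact he2m
      · exact hf
  have he1' : e1 ∉ G'.edgeFinset := fun hh => ((hEchar e1).1 hh).2.1 rfl
  have he2'' : e2 ∉ G'.edgeFinset := fun hh => ((hEchar e2).1 hh).2.2 rfl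
  refine ⟨insert {e1, e2} M0, hM0.extend hE he1' he2'' hne hshare, ?_⟩
  intro M hM
  have hpair := hforced M hM
  have hres : MOK G'.edgeFinset (M.erase {e1, e2}) := hM.restrict hpair hne hEchar
  rw [← hM0uniq _ hres]
  exact (Finset.insert_erase hpair).symm

end Main
section Main2

variable {V : Type*} [Fintype V] [DecidableEq V]

lemma aux :
    ∀ (N : ℕ) (G : SimpleGraph V) (_ : DecidableRel G.Adj),
      G.IsAcyclic → (∀ v, G.degree v ≤ 3) → G.edgeFinset.card = 2 * N →
      (∀ c : G.ConnectedComponent,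
        Even ({e ∈ G.edgeSet | ∀ v ∈ e, G.connectedComponentMk v = c}.ncard)) →
      ∃! M, MOK G.edgeFinset M := by
  intro N
  induction N with
  | zero =>
    intro G instG _ _ hcard _
    have hE : G.edgeFinset = ∅ := Finset.card_eq_zero.1 (by simpa using hcard)
    rw [hE]
    exact ⟨∅, MOK_empty.2 rfl, fun M hM => MOK_empty.1 hM⟩
  | succ m ih =>
    intro G instG hforest hdeg hcard heven
    -- there is an edge
    have hpos : 0 < G.edgeFinset.card := by omega
    obtain ⟨e0, he0⟩ := Finset.card_pos.1 hpos
    induction e0 with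
    | _ x0 u0 =>
    have hadj0 : G.Adj x0 u0 := by
      rw [SimpleGraph.mem_edgeFinset, SimpleGraph.mem_edgeSet] at he0
      exact he0
    -- maximal path
    obtain ⟨⟨a, b, P⟩, -, hmax⟩ := Finset.exists_max_image
      (Finset.univ : Finset (Σ a : V, Σ b : V, G.Path a b))
      (fun s => s.2.2.1.length)
      ⟨⟨x0, u0, SimpleGraph.Path.singleton hadj0⟩, Finset.mem_univ _⟩
    obtain ⟨w, hw⟩ := P
    have hmax' : ∀ (c d : V) (Q : G.Path c d), Q.1.length ≤ w.length :=
      fun c d Q => hmax ⟨c, d, Q⟩ (Finset.mem_univ _)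
    clear hmax
    cases w with
    | nil =>
      exfalso
      have := hmax' x0 u0 (SimpleGraph.Path.singleton hadj0)
      simp [SimpleGraph.Path.singleton] at this
    | cons h q =>
    rename_i u
    -- w = cons h q, h : G.Adj a u, q : G.Walk u b
    have haleaf : ∀ y, G.Adj a y → y = u := by
      intro y hy
      by_cases hys : y ∈ (SimpleGraph.Walk.cons h q).support
      · exact snd_of_edge hw (start_edge_mem hforest hw hy hys)
      · exfalso
        have hext : (SimpleGraph.Walk.cons hy.symm (SimpleGraph.Walk.cons h q)).IsPath :=
          (SimpleGraph.Walk.cons_isPath_iff _ _).2 ⟨hw, hys⟩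
        have := hmax' y b ⟨_, hext⟩
        simp only [SimpleGraph.Walk.length_cons] at this
        omega
    have hau : a ≠ u := h.ne
    cases q with
    | nil =>
      -- w = cons h nil, so b = u; single-edge component: contradicts parity
      exfalso
      have huleaf : ∀ z, G.Adj b z → z = a := by
        intro z hz
        by_cases hzs : z ∈ (SimpleGraph.Walk.cons h SimpleGraph.Walk.nil : G.Walk a b).support
        · simp only [SimpleGraph.Walk.support_cons, SimpleGraph.Walk.support_nil,
            List.mem_cons, List.mem_singleton] at hzs
          rcases hzs with rfl | rfl | hzs
          · rfl
          · exact absurd hz (G.irrefl)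
          · exact absurd hzs List.not_mem_nil
        · exfalso
          have hpath2 : (SimpleGraph.Walk.cons h.symm SimpleGraph.Walk.nil : G.Walk b a).IsPath := by
            rw [SimpleGraph.Walk.cons_isPath_iff]
            refine ⟨SimpleGraph.Walk.IsPath.nil, ?_⟩
            simp [hau.symm]
          have hpath3 : (SimpleGraph.Walk.cons hz.symm
              (SimpleGraph.Walk.cons h.symm SimpleGraph.Walk.nil) : G.Walk z a).IsPath := by
            rw [SimpleGraph.Walk.cons_isPath_iff]
            refine ⟨hpath2, ?_⟩
            simp only [SimpleGraph.Walk.support_cons, SimpleGraph.Walk.support_nil,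
              List.mem_cons, List.mem_singleton, not_or]
            refine ⟨hz.ne', ?_⟩
            simp only [SimpleGraph.Walk.support_cons, SimpleGraph.Walk.support_nil,
              List.mem_cons, List.mem_singleton, not_or] at hzs
            exact ⟨hzs.1, by simpa using hzs.2⟩
          have := hmax' z a ⟨_, hpath3⟩
          simp only [SimpleGraph.Walk.length_cons, SimpleGraph.Walk.length_nil] at this
          omega
      have hclosed : ∀ x ∈ ({a, b} : Set V), ∀ y, G.Adj x y → y ∈ ({a, b} : Set V) := by
        rintro x (rfl | rfl) y hy
        · exact Or.inr (haleaf y hy)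
        · exact Or.inl (huleaf y hy)
      have hS1 : {e ∈ G.edgeSet | ∀ v ∈ e,
          G.connectedComponentMk v = G.connectedComponentMk b} = {s(a, b)} := by
        ext e
        simp only [Set.mem_setOf_eq, Set.mem_singleton_iff]
        constructor
        · rintro ⟨heS, hall⟩
          induction e with
          | _ c d =>
            have hcd : G.Adj c d := heS
            have hc : c ∈ ({a, b} : Set V) := by
              obtain ⟨pw⟩ := (SimpleGraph.ConnectedComponent.eq.1 (hall c (by simp))).symm
              exact walk_closed hclosed pw (Or.inr rfl)
            have hd : d ∈ ({a, b} : Set V) := by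
              obtain ⟨pw⟩ := (SimpleGraph.ConnectedComponent.eq.1 (hall d (by simp))).symm
              exact walk_closed hclosed pw (Or.inr rfl)
            rcases hc with rfl | rfl <;> rcases hd with rfl | rfl
            · exact absurd hcd (G.irrefl)
            · rfl
            · exact Sym2.eq_swap
            · exact absurd hcd (G.irrefl)
        · rintro rfl
          refine ⟨h, ?_⟩
          intro v hv
          rcases Sym2.mem_iff.1 hv with rfl | rfl
          · exact SimpleGraph.ConnectedComponent.sound h.reachable
          · rfl
      have := heven (G.connectedComponentMk b)
      rw [hS1] at this
      rw [Set.ncard_singleton] at this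
      exact (Nat.not_even_one) this
    | cons h2 r =>
    rename_i t
    -- w = cons h (cons h2 r), h2 : G.Adj u t, r : G.Walk t b
    have hut : u ≠ t := h2.ne
    have hat : a ≠ t := by
      intro hh
      subst hh
      have : a ∈ (SimpleGraph.Walk.cons h2 r).support := by
        rw [SimpleGraph.Walk.support_cons]
        exact List.mem_cons_of_mem _ r.start_mem_support
      exact ((SimpleGraph.Walk.cons_isPath_iff _ _).1 hw).2 this
    have hqpath : (SimpleGraph.Walk.cons h2 r).IsPath := hw.of_cons
    -- characterize membership of u-neighbours in the support
    have husupp : ∀ z, G.Adj u z → z ≠ a → z ∈ (SimpleGraph.Walk.cons h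
        (SimpleGraph.Walk.cons h2 r)).support → z = t := by
      intro z hz hza hzs
      have hzq : z ∈ (SimpleGraph.Walk.cons h2 r).support := by
        rw [SimpleGraph.Walk.support_cons] at hzs
        rcases List.mem_cons.1 hzs with rfl | hh
        · exact absurd rfl hza
        · exact hh
      exact snd_of_edge hqpath (start_edge_mem hforest hqpath hz hzq)
    by_cases hzex : ∃ z, G.Adj u z ∧ z ≠ a ∧ z ≠ t
    · -- CASE A
      obtain ⟨z, hzadj, hza, hzt⟩ := hzex
      have hzu : z ≠ u := hzadj.ne'
      have hzsup : z ∉ (SimpleGraph.Walk.cons h (SimpleGraph.Walk.cons h2 r)).support :=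
        fun hh => hzt (husupp z hzadj hza hh)
      have hzleaf : ∀ y, G.Adj z y → y = u := by
        intro y hy
        have hq2path : (SimpleGraph.Walk.cons hzadj.symm
            (SimpleGraph.Walk.cons h2 r)).IsPath := by
          rw [SimpleGraph.Walk.cons_isPath_iff]
          refine ⟨hqpath, fun hh => hzsup ?_⟩
          rw [SimpleGraph.Walk.support_cons]
          exact List.mem_cons_of_mem _ hh
        by_cases hys : y ∈ (SimpleGraph.Walk.cons hzadj.symm
            (SimpleGraph.Walk.cons h2 r)).support
        · exact snd_of_edge hq2path (start_edge_mem hforest hq2path hy hys)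
        · exfalso
          have hext : (SimpleGraph.Walk.cons hy.symm (SimpleGraph.Walk.cons hzadj.symm
              (SimpleGraph.Walk.cons h2 r))).IsPath :=
            (SimpleGraph.Walk.cons_isPath_iff _ _).2 ⟨hq2path, hys⟩
          have := hmax' y b ⟨_, hext⟩
          simp only [SimpleGraph.Walk.length_cons] at this
          omega
      -- neighbours of u are exactly {a, t, z}
      have hsub3 : ({a, t, z} : Finset V) ⊆ G.neighborFinset u := by
        intro y hy
        rw [SimpleGraph.mem_neighborFinset]
        simp only [Finset.mem_insert, Finset.mem_singleton] at hy
        rcases hy with rfl | rfl | rfl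
        · exact h.symm
        · exact h2
        · exact hzadj
      have hatz : a ∉ ({t, z} : Finset V) := by
        simp only [Finset.mem_insert, Finset.mem_singleton]
        push_neg
        exact ⟨hat, fun hh => hza hh.symm⟩
      have htz : t ∉ ({z} : Finset V) := by
        simp only [Finset.mem_singleton]
        exact fun hh => hzt hh.symm
      have hcard3 : ({a, t, z} : Finset V).card = 3 := by
        rw [Finset.card_insert_of_notMem hatz, Finset.card_insert_of_notMem htz,
          Finset.card_singleton]
      have heq3 : ({a, t, z} : Finset V) = G.neighborFinset u :=
        Finset.eq_of_subset_of_card_le hsub3 (by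
          rw [hcard3]
          exact hdeg u)
      have hNu : ∀ y, G.Adj u y → (y = a ∨ y = t ∨ y = z) := by
        intro y hy
        have hyn : y ∈ G.neighborFinset u := (SimpleGraph.mem_neighborFinset _ _ _).2 hy
        rw [← heq3] at hyn
        simpa using hyn
      -- the two deleted edges
      have he1m : (s(a, u) : Sym2 V) ∈ G.edgeFinset := by
        rw [SimpleGraph.mem_edgeFinset, SimpleGraph.mem_edgeSet]; exact h
      have he2m : (s(z, u) : Sym2 V) ∈ G.edgeFinset := by
        rw [SimpleGraph.mem_edgeFinset, SimpleGraph.mem_edgeSet]; exact hzadj.symm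
      have hne12 : (s(a, u) : Sym2 V) ≠ s(z, u) := by
        rw [Ne, Sym2.eq_iff]
        rintro (⟨h1, -⟩ | ⟨h1, -⟩)
        · exact hza h1.symm
        · exact hau h1
      have hg1 : (s(t, u) : Sym2 V) ≠ s(a, u) := by
        rw [Ne, Sym2.eq_iff]
        rintro (⟨h1, -⟩ | ⟨h1, -⟩)
        · exact hat h1.symm
        · exact hut h1.symm
      have hg2 : (s(t, u) : Sym2 V) ≠ s(z, u) := by
        rw [Ne, Sym2.eq_iff]
        rintro (⟨h1, -⟩ | ⟨h1, -⟩)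
        · exact hzt h1.symm
        · exact hut h1.symm
      have hadj1 : ∀ f ∈ G.edgeFinset, f ≠ s(a, u) →
          (∃ v : V, v ∈ (s(a, u) : Sym2 V) ∧ v ∈ f) → f = s(z, u) ∨ f = s(t, u) := by
        rintro f hf hfne ⟨v, hv1, hvf⟩
        have hfS : f ∈ G.edgeSet := SimpleGraph.mem_edgeFinset.1 hf
        rcases Sym2.mem_iff.1 hv1 with rfl | rfl
        · obtain ⟨y, hy, rfl⟩ := edge_through hfS hvf
          rw [haleaf y hy] at hfne
          exact absurd rfl hfne
        · obtain ⟨y, hy, rfl⟩ := edge_through hfS hvf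
          rcases hNu y hy with rfl | rfl | rfl
          · exact absurd Sym2.eq_swap hfne
          · exact Or.inr Sym2.eq_swap
          · exact Or.inl Sym2.eq_swap
      have hadj2 : ∀ f ∈ G.edgeFinset, f ≠ s(z, u) →
          (∃ v : V, v ∈ (s(z, u) : Sym2 V) ∧ v ∈ f) → f = s(a, u) ∨ f = s(t, u) := by
        rintro f hf hfne ⟨v, hv1, hvf⟩
        have hfS : f ∈ G.edgeSet := SimpleGraph.mem_edgeFinset.1 hf
        rcases Sym2.mem_iff.1 hv1 with rfl | rfl
        · obtain ⟨y, hy, rfl⟩ := edge_through hfS hvf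
          rw [hzleaf y hy] at hfne
          exact absurd rfl hfne
        · obtain ⟨y, hy, rfl⟩ := edge_through hfS hvf
          rcases hNu y hy with rfl | rfl | rfl
          · exact Or.inl Sym2.eq_swap
          · exact Or.inr Sym2.eq_swap
          · exact absurd Sym2.eq_swap hfne
      refine finish_step G hforest hdeg hcard heven (fun G' inst => @ih G' inst)
        hne12 he1m he2m ⟨u, by simp, by simp⟩
        (fun M hM => hM.forcedA he1m he2m hne12 hg1 hg2 hadj1 hadj2)
        (B := {a, z}) ⟨a, Or.inl rfl, by simp⟩ ⟨z, Or.inr rfl, by simp⟩ ?_ ?_ ?_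
      · -- H2
        intro x y p hp hx hy v hv hvs
        have hvx : v ≠ x := fun hh => hx (hh ▸ hv)
        have hvy : v ≠ y := fun hh => hy (hh ▸ hv)
        obtain ⟨n1, n2, hn, ha1, ha2, -, -⟩ := internal_two_nbrs hp hvs hvx hvy
        rcases hv with rfl | hv
        · exact hn ((haleaf n1 ha1).trans (haleaf n2 ha2).symm)
        · rw [Set.mem_singleton_iff] at hv
          subst hv
          exact hn ((hzleaf n1 ha1).trans (hzleaf n2 ha2).symm)
      · -- H3
        rintro v hv w hadj'
        rw [SimpleGraph.deleteEdges_adj] at hadj'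
        obtain ⟨hGadj, hns⟩ := hadj'
        rcases hv with rfl | hv
        · rw [haleaf w hGadj] at hns
          exact hns (Or.inl rfl)
        · rw [Set.mem_singleton_iff] at hv
          subst hv
          rw [hzleaf w hGadj] at hns
          exact hns (Or.inr rfl)
      · -- H4
        intro f hfS v hv hvf
        rcases hv with rfl | hv
        · obtain ⟨y, hy, rfl⟩ := edge_through hfS hvf
          rw [haleaf y hy]
          exact Or.inl rfl
        · rw [Set.mem_singleton_iff] at hv
          subst hv
          obtain ⟨y, hy, rfl⟩ := edge_through hfS hvf
          rw [hzleaf y hy]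
          exact Or.inr rfl
    · -- CASE B
      push_neg at hzex
      have hNu : ∀ y, G.Adj u y → y = a ∨ y = t := by
        intro y hy
        by_cases hya : y = a
        · exact Or.inl hya
        · exact Or.inr (hzex y hy hya)
      have he1m : (s(a, u) : Sym2 V) ∈ G.edgeFinset := by
        rw [SimpleGraph.mem_edgeFinset, SimpleGraph.mem_edgeSet]; exact h
      have he2m : (s(u, t) : Sym2 V) ∈ G.edgeFinset := by
        rw [SimpleGraph.mem_edgeFinset, SimpleGraph.mem_edgeSet]; exact h2
      have hne12 : (s(a, u) : Sym2 V) ≠ s(u, t) := by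
        rw [Ne, Sym2.eq_iff]
        rintro (⟨h1, -⟩ | ⟨h1, -⟩)
        · exact hau h1
        · exact hat h1
      have hadjB : ∀ f ∈ G.edgeFinset, f ≠ s(a, u) →
          (∃ v : V, v ∈ (s(a, u) : Sym2 V) ∧ v ∈ f) → f = s(u, t) := by
        rintro f hf hfne ⟨v, hv1, hvf⟩
        have hfS : f ∈ G.edgeSet := SimpleGraph.mem_edgeFinset.1 hf
        rcases Sym2.mem_iff.1 hv1 with rfl | rfl
        · obtain ⟨y, hy, rfl⟩ := edge_through hfS hvf
          rw [haleaf y hy] at hfne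
          exact absurd rfl hfne
        · obtain ⟨y, hy, rfl⟩ := edge_through hfS hvf
          rcases hNu y hy with rfl | rfl
          · exact absurd Sym2.eq_swap hfne
          · rfl
      refine finish_step G hforest hdeg hcard heven (fun G' inst => @ih G' inst)
        hne12 he1m he2m ⟨u, by simp, by simp⟩
        (fun M hM => hM.forcedB he1m hadjB)
        (B := {a, u}) ⟨a, Or.inl rfl, by simp⟩ ⟨u, Or.inr rfl, by simp⟩ ?_ ?_ ?_
      · -- H2
        intro x y p hp hx hy v hv hvs
        have hxa : x ≠ a := fun hh => hx (hh ▸ Or.inl rfl)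
        have hya' : y ≠ a := fun hh => hy (hh ▸ Or.inl rfl)
        have hasup : a ∈ p.support → False := by
          intro has
          obtain ⟨n1, n2, hn, ha1, ha2, -, -⟩ :=
            internal_two_nbrs hp has (fun hh => hxa hh.symm) (fun hh => hya' hh.symm)
          exact hn ((haleaf n1 ha1).trans (haleaf n2 ha2).symm)
        rcases hv with rfl | hv
        · exact hasup hvs
        · rw [Set.mem_singleton_iff] at hv
          subst hv
          have hvx : v ≠ x := fun hh => hx (hh ▸ Or.inr rfl)
          have hvy : v ≠ y := fun hh => hy (hh ▸ Or.inr rfl)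
          obtain ⟨n1, n2, hn, ha1, ha2, hs1, hs2⟩ := internal_two_nbrs hp hvs hvx hvy
          rcases hNu n1 ha1 with rfl | rfl
          · exact hasup hs1
          · rcases hNu n2 ha2 with rfl | rfl
            · exact hasup hs2
            · exact hn rfl
      · -- H3
        rintro v hv w hadj'
        rw [SimpleGraph.deleteEdges_adj] at hadj'
        obtain ⟨hGadj, hns⟩ := hadj'
        rcases hv with rfl | hv
        · rw [haleaf w hGadj] at hns
          exact hns (Or.inl rfl)
        · rw [Set.mem_singleton_iff] at hv
          subst hv
          rcases hNu w hGadj with rfl | rfl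
          · exact hns (Or.inl Sym2.eq_swap)
          · exact hns (Or.inr rfl)
      · -- H4
        intro f hfS v hv hvf
        rcases hv with rfl | hv
        · obtain ⟨y, hy, rfl⟩ := edge_through hfS hvf
          rw [haleaf y hy]
          exact Or.inl rfl
        · rw [Set.mem_singleton_iff] at hv
          subst hv
          obtain ⟨y, hy, rfl⟩ := edge_through hfS hvf
          rcases hNu y hy with rfl | rfl
          · exact Or.inl Sym2.eq_swap
          · exact Or.inr rfl

end Main2

/-- An at most trivalent finite forest with `2N` edges, each of whose connected
components has an even number of edges, admits a unique perfect matching of its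
edges into pairs of adjacent edges (edges sharing a vertex). -/
theorem stmt3 {V : Type*} [Fintype V] [DecidableEq V] (N : ℕ)
    (G : SimpleGraph V) [DecidableRel G.Adj]
    (hforest : G.IsAcyclic)
    (hdeg : ∀ v : V, G.degree v ≤ 3)
    (hcard : G.edgeFinset.card = 2 * N)
    (heven : ∀ c : G.ConnectedComponent,
      Even ({e ∈ G.edgeSet | ∀ v ∈ e, G.connectedComponentMk v = c}.ncard)) :
    ∃! M : Finset (Finset (Sym2 V)),
      (∀ p ∈ M, ∃ e f, e ∈ G.edgeFinset ∧ f ∈ G.edgeFinset ∧ e ≠ f ∧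
          p = {e, f} ∧ ∃ v : V, v ∈ e ∧ v ∈ f)
      ∧ (∀ e ∈ G.edgeFinset, ∃! p, p ∈ M ∧ e ∈ p) := by
  exact aux N G inferInstance hforest hdeg hcard heven
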